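/- Assume M is bounded from Λᵖ_u(w) to Λ^{p,∞}_u(w) for some p > 1 (with constant C₀), and assume the conclusions of the pointwise lemma (χ_{{Mχ_E>λ}} ≲ (λ(1-logλ))^{-1} M(χ_{{Mχ_E>λ}}Mχ_E)) and the logarithmic norm bound (‖χ_{{Mχ_E>λ}}Mχ_E‖ᵖ ≲ (1+log(1/λ))‖χ_E‖ᵖ). Then for every Borel set E and λ ∈ (0,1): W(u({Mχ_E > λ})) ≲ λ^{-p}(1 - log λ)^{-(p-1)} ‖χ_E‖ᵖ_{Λᵖ_u(w)}. -/

import Mathlib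

open MeasureTheory ENNReal Set
open Filter Topology

/-- The closed cube in `ℝ^d` with center `c` and half side length `r`. -/
def cube (d : ℕ) (c : Fin d → ℝ) (r : ℝ) : Set (Fin d → ℝ) :=
  {y | ∀ i, |y i - c i| ≤ r}

/-- The uncentered Hardy–Littlewood maximal operator over cubes. -/
noncomputable def maximal (d : ℕ) (f : (Fin d → ℝ) → ℝ≥0∞) (x : Fin d → ℝ) : ℝ≥0∞ :=
  ⨆ (c : Fin d → ℝ) (r : ℝ) (_ : 0 < r) (_ : x ∈ cube d c r),
    (∫⁻ y in cube d c r, f y) / volume (cube d c r)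

/-- `u(A) = ∫_A u` for a weight `u` on `ℝ^d`. -/
noncomputable def uMeas (d : ℕ) (u : (Fin d → ℝ) → ℝ≥0∞) (A : Set (Fin d → ℝ)) : ℝ≥0∞ :=
  ∫⁻ x in A, u x

/-- `W(t) = ∫_0^t w(s) ds` (extended to arguments in `ℝ≥0∞`). -/
noncomputable def Wfun (w : ℝ → ℝ≥0∞) (t : ℝ≥0∞) : ℝ≥0∞ :=
  ∫⁻ s in {s : ℝ | 0 < s ∧ ENNReal.ofReal s < t}, w s

/-- `‖f‖_{Λ^p_u(w)}^p = ∫_0^∞ p t^{p-1} W(u({|f| > t})) dt`. -/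
noncomputable def lorentzP (d : ℕ) (p : ℝ) (u : (Fin d → ℝ) → ℝ≥0∞) (w : ℝ → ℝ≥0∞)
    (f : (Fin d → ℝ) → ℝ≥0∞) : ℝ≥0∞ :=
  ∫⁻ t in Set.Ioi (0:ℝ), ENNReal.ofReal (p * t ^ (p-1)) *
    Wfun w (uMeas d u {x | ENNReal.ofReal t < f x})

lemma cube_eq_pi (d : ℕ) (c : Fin d → ℝ) (r : ℝ) :
    cube d c r = Set.pi Set.univ (fun i => Set.Icc (c i - r) (c i + r)) := by
  ext y
  simp only [cube, Set.mem_setOf_eq, Set.mem_pi, Set.mem_univ, true_implies, Set.mem_Icc, abs_le]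
  constructor <;> intro h i <;> obtain ⟨h1, h2⟩ := h i <;> constructor <;> linarith

lemma cube_mono (d : ℕ) (c : Fin d → ℝ) {r r' : ℝ} (h : r ≤ r') :
    cube d c r ⊆ cube d c r' := fun y hy i => le_trans (hy i) h

lemma volume_cube (d : ℕ) (c : Fin d → ℝ) {r : ℝ} (hr : 0 < r) :
    volume (cube d c r) = ENNReal.ofReal (2 * r) ^ d := by
  rw [cube_eq_pi, volume_pi_pi]
  have h : ∀ i : Fin d, volume (Icc (c i - r) (c i + r)) = ENNReal.ofReal (2 * r) := by
    intro i; rw [Real.volume_Icc]; congr 1; ring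
  rw [Finset.prod_congr rfl (fun i _ => h i), Finset.prod_const, Finset.card_univ,
    Fintype.card_fin]

lemma volume_cube_ne_zero (d : ℕ) (c : Fin d → ℝ) {r : ℝ} (hr : 0 < r) :
    volume (cube d c r) ≠ 0 := by
  rw [volume_cube d c hr]
  exact pow_ne_zero d (ENNReal.ofReal_pos.mpr (by linarith)).ne'

lemma volume_cube_ne_top (d : ℕ) (c : Fin d → ℝ) {r : ℝ} (hr : 0 < r) :
    volume (cube d c r) ≠ ⊤ := by
  rw [volume_cube d c hr]
  exact (pow_ne_top ofReal_ne_top)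

lemma le_maximal (d : ℕ) (f : (Fin d → ℝ) → ℝ≥0∞) (c : Fin d → ℝ) {r : ℝ} (hr : 0 < r)
    {x : Fin d → ℝ} (hx : x ∈ cube d c r) :
    (∫⁻ y in cube d c r, f y) / volume (cube d c r) ≤ maximal d f x :=
  le_iSup_of_le c (le_iSup_of_le r (le_iSup_of_le hr (le_iSup_of_le hx le_rfl)))

lemma maximal_lsc (d : ℕ) (f : (Fin d → ℝ) → ℝ≥0∞) :
    LowerSemicontinuous (maximal d f) := by
  intro x t ht
  rw [maximal] at ht
  obtain ⟨c0, hc0⟩ := lt_iSup_iff.mp ht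
  obtain ⟨r, hr⟩ := lt_iSup_iff.mp hc0
  obtain ⟨hrpos, hr2⟩ := lt_iSup_iff.mp hr
  obtain ⟨hx, hlt⟩ := lt_iSup_iff.mp hr2
  set I := ∫⁻ y in cube d c0 r, f y with hI
  have htne : t ≠ ⊤ := ht.ne_top
  obtain ⟨r', hrr', htr'⟩ : ∃ r', r < r' ∧ t < I / volume (cube d c0 r') := by
    by_cases hItop : I = ⊤
    · refine ⟨r + 1, by linarith, ?_⟩
      rw [hItop, ENNReal.top_div_of_ne_top (volume_cube_ne_top d c0 (by linarith))]
      exact htne.lt_top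
    · have hv0 := volume_cube_ne_zero d c0 hrpos
      have hvt := volume_cube_ne_top d c0 hrpos
      have hmul : t * volume (cube d c0 r) < I :=
        (ENNReal.lt_div_iff_mul_lt (Or.inl hv0) (Or.inl hvt)).mp hlt
      have hreal : t.toReal * (2 * r) ^ d < I.toReal := by
        have h1 : (t * volume (cube d c0 r)).toReal < I.toReal :=
          ENNReal.toReal_strict_mono hItop hmul
        rwa [ENNReal.toReal_mul, volume_cube d c0 hrpos, ENNReal.toReal_pow,
          ENNReal.toReal_ofReal (by linarith)] at h1
      have hcont : Continuous (fun s : ℝ => t.toReal * (2 * s) ^ d) := by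
        continuity
      have hev : ∀ᶠ s in 𝓝[>] r, t.toReal * (2 * s) ^ d < I.toReal :=
        ((hcont.continuousAt.eventually_lt_const hreal).filter_mono nhdsWithin_le_nhds)
      obtain ⟨r', hsmall, hr'⟩ := (hev.and eventually_mem_nhdsWithin).exists
      refine ⟨r', hr', ?_⟩
      have hr'pos : 0 < r' := lt_trans hrpos hr'
      rw [ENNReal.lt_div_iff_mul_lt (Or.inl (volume_cube_ne_zero d c0 hr'pos))
        (Or.inl (volume_cube_ne_top d c0 hr'pos))]
      calc t * volume (cube d c0 r')
          = ENNReal.ofReal (t.toReal * (2 * r') ^ d) := by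
            rw [volume_cube d c0 hr'pos, ← ENNReal.ofReal_pow (by linarith),
              ENNReal.ofReal_mul ENNReal.toReal_nonneg, ENNReal.ofReal_toReal htne]
        _ < ENNReal.ofReal I.toReal := by
            rw [ENNReal.ofReal_lt_ofReal_iff (lt_of_le_of_lt (by positivity) hsmall)]
            exact hsmall
        _ = I := ENNReal.ofReal_toReal hItop
  have hr'pos : 0 < r' := lt_trans hrpos hrr'
  have hU : IsOpen (Set.pi Set.univ fun i => Ioo (x i - (r' - r)) (x i + (r' - r))) :=
    isOpen_set_pi Set.finite_univ (fun i _ => isOpen_Ioo)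
  have hxU : x ∈ Set.pi Set.univ fun i => Ioo (x i - (r' - r)) (x i + (r' - r)) := by
    intro i _
    constructor <;> [skip; skip] <;> simp <;> linarith
  filter_upwards [hU.mem_nhds hxU] with y hy
  have hycube : y ∈ cube d c0 r' := by
    intro i
    have h1 := hy i (mem_univ i)
    have h2 := abs_le.mp (hx i)
    rw [abs_le]
    obtain ⟨ha, hb⟩ := h1
    constructor <;> linarith [h2.1, h2.2]
  calc t < I / volume (cube d c0 r') := htr'
    _ ≤ (∫⁻ y in cube d c0 r', f y) / volume (cube d c0 r') :=
        ENNReal.div_le_div_right (lintegral_mono_set (cube_mono d c0 hrr'.le)) _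
    _ ≤ maximal d f y := le_maximal d f c0 hr'pos hycube

lemma maximal_measurable (d : ℕ) (f : (Fin d → ℝ) → ℝ≥0∞) :
    Measurable (maximal d f) := (maximal_lsc d f).measurable

lemma Wfun_mono (w : ℝ → ℝ≥0∞) {a b : ℝ≥0∞} (h : a ≤ b) : Wfun w a ≤ Wfun w b :=
  lintegral_mono_set (fun s hs => ⟨hs.1, lt_of_lt_of_le hs.2 h⟩)

/-- Assuming the weak-type boundedness, the pointwise lemma, and the logarithmic norm bound,
one gets `W(u({Mχ_E > λ})) ≲ λ^{-p} (1 - log λ)^{-(p-1)} ‖χ_E‖^p`. -/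
theorem improved_weak_bound (d : ℕ) (p : ℝ) (hp : 1 < p)
    (u : (Fin d → ℝ) → ℝ≥0∞) (w : ℝ → ℝ≥0∞)
    (CΔ : ℝ) (hΔ : ∀ t : ℝ≥0∞, Wfun w (2 * t) ≤ ENNReal.ofReal CΔ * Wfun w t)
    (C₀ : ℝ) (hC₀ : 0 < C₀)
    (hweak : ∀ f : (Fin d → ℝ) → ℝ≥0∞, Measurable f → ∀ t : ℝ, 0 < t →
      (ENNReal.ofReal t) ^ p *
        Wfun w (uMeas d u {x | ENNReal.ofReal t < maximal d f x}) ≤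
          ENNReal.ofReal C₀ * lorentzP d p u w f)
    (c : ℝ) (hc : 0 < c)
    (hpt : ∀ E : Set (Fin d → ℝ), MeasurableSet E → ∀ l : ℝ, 0 < l → l < 1 →
      ∀ x : Fin d → ℝ,
        ({y | ENNReal.ofReal l < maximal d (E.indicator 1) y}.indicator
            (fun _ => (1:ℝ≥0∞)) x) ≤
          ENNReal.ofReal (c / (l * (1 - Real.log l))) *
            maximal d (({y | ENNReal.ofReal l < maximal d (E.indicator 1) y}).indicator
              (maximal d (E.indicator 1))) x)
    (C₁ : ℝ) (hC₁ : 0 < C₁)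
    (hlog : ∀ E : Set (Fin d → ℝ), MeasurableSet E → ∀ l : ℝ, 0 < l → l < 1 →
      lorentzP d p u w (({x | ENNReal.ofReal l < maximal d (E.indicator 1) x}).indicator
          (maximal d (E.indicator 1))) ≤
        ENNReal.ofReal (C₁ * (1 + Real.log (1 / l))) *
          lorentzP d p u w (E.indicator 1)) :
    ∃ C : ℝ, 0 < C ∧ ∀ E : Set (Fin d → ℝ), MeasurableSet E → ∀ l : ℝ, 0 < l → l < 1 →
      Wfun w (uMeas d u {x | ENNReal.ofReal l < maximal d (E.indicator 1) x}) ≤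
        ENNReal.ofReal (C / (l ^ p * (1 - Real.log l) ^ (p - 1))) *
          lorentzP d p u w (E.indicator 1) := by
  have h2c : (0:ℝ) < 2 * c := by linarith
  refine ⟨C₀ * C₁ * (2 * c) ^ p,
    mul_pos (mul_pos hC₀ hC₁) (Real.rpow_pos_of_pos h2c p), ?_⟩
  intro E hE l hl hl1
  have hL : 0 < 1 - Real.log l := by
    have := Real.log_neg hl hl1; linarith
  have hlog1 : 1 + Real.log (1 / l) = 1 - Real.log l := by
    rw [one_div, Real.log_inv]; ring
  set g : (Fin d → ℝ) → ℝ≥0∞ :=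
    ({x | ENNReal.ofReal l < maximal d (E.indicator 1) x}).indicator
      (maximal d (E.indicator 1)) with hgdef
  set tv : ℝ := l * (1 - Real.log l) / (2 * c) with htvdef
  have htv0 : 0 < tv := div_pos (mul_pos hl hL) h2c
  have hg : Measurable g :=
    (maximal_measurable d _).indicator
      (measurableSet_lt measurable_const (maximal_measurable d _))
  -- inclusion
  have hsub : {x | ENNReal.ofReal l < maximal d (E.indicator 1) x} ⊆
      {x | ENNReal.ofReal tv < maximal d g x} := by
    intro x hx
    have h1 := hpt E hE l hl hl1 x
    rw [Set.indicator_of_mem hx] at h1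
    set K : ℝ := c / (l * (1 - Real.log l)) with hKdef
    have hK : 0 < K := div_pos hc (mul_pos hl hL)
    have h2 : (ENNReal.ofReal K)⁻¹ ≤ maximal d g x := by
      calc (ENNReal.ofReal K)⁻¹ = (ENNReal.ofReal K)⁻¹ * 1 := (mul_one _).symm
        _ ≤ (ENNReal.ofReal K)⁻¹ * (ENNReal.ofReal K * maximal d g x) :=
            mul_le_mul_right h1 _
        _ = maximal d g x := by
            rw [← mul_assoc, ENNReal.inv_mul_cancel (ENNReal.ofReal_pos.mpr hK).ne'
              ENNReal.ofReal_ne_top, one_mul]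
    have h3 : ENNReal.ofReal tv < (ENNReal.ofReal K)⁻¹ := by
      rw [← ENNReal.ofReal_inv_of_pos hK]
      apply (ENNReal.ofReal_lt_ofReal_iff (by positivity)).mpr
      rw [hKdef, inv_div]
      exact div_lt_div_of_pos_left (mul_pos hl hL) hc (by linarith)
    exact lt_of_lt_of_le h3 h2
  have hu : uMeas d u {x | ENNReal.ofReal l < maximal d (E.indicator 1) x} ≤
      uMeas d u {x | ENNReal.ofReal tv < maximal d g x} := lintegral_mono_set hsub
  have hW1 := Wfun_mono w hu
  have hwk := hweak g hg tv htv0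
  have hlg := hlog E hE l hl hl1
  rw [← hgdef] at hlg
  set A : ℝ≥0∞ := ENNReal.ofReal (tv ^ p) with hAdef
  have hA0 : A ≠ 0 := (ENNReal.ofReal_pos.mpr (Real.rpow_pos_of_pos htv0 p)).ne'
  have hXA : ENNReal.ofReal tv ^ p = A := ENNReal.ofReal_rpow_of_pos htv0
  rw [hXA] at hwk
  have key : Wfun w (uMeas d u {x | ENNReal.ofReal tv < maximal d g x}) ≤
      A⁻¹ * (ENNReal.ofReal C₀ * (ENNReal.ofReal (C₁ * (1 + Real.log (1 / l))) *
        lorentzP d p u w (E.indicator 1))) := by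
    calc Wfun w (uMeas d u {x | ENNReal.ofReal tv < maximal d g x})
        = A⁻¹ * (A * Wfun w (uMeas d u {x | ENNReal.ofReal tv < maximal d g x})) := by
          rw [← mul_assoc, ENNReal.inv_mul_cancel hA0 ENNReal.ofReal_ne_top, one_mul]
      _ ≤ A⁻¹ * (ENNReal.ofReal C₀ * lorentzP d p u w g) := mul_le_mul_right hwk _
      _ ≤ _ := mul_le_mul_right (mul_le_mul_right hlg _) _
  have hid : A⁻¹ * (ENNReal.ofReal C₀ * (ENNReal.ofReal (C₁ * (1 + Real.log (1 / l))) *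
        lorentzP d p u w (E.indicator 1))) =
      ENNReal.ofReal (C₀ * C₁ * (2 * c) ^ p / (l ^ p * (1 - Real.log l) ^ (p - 1))) *
        lorentzP d p u w (E.indicator 1) := by
    rw [hAdef, ← ENNReal.ofReal_inv_of_pos (Real.rpow_pos_of_pos htv0 p), ← mul_assoc,
      ← mul_assoc, ← ENNReal.ofReal_mul (by positivity), ← ENNReal.ofReal_mul (by positivity)]
    congr 2
    rw [hlog1, htvdef]
    have hLp : (1 - Real.log l) ^ p = (1 - Real.log l) ^ (p - 1) * (1 - Real.log l) := by
      have h := Real.rpow_add hL (p - 1) 1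
      rw [sub_add_cancel, Real.rpow_one] at h
      exact h
    rw [Real.div_rpow (mul_pos hl hL).le h2c.le, Real.mul_rpow hl.le hL.le, hLp]
    have e1 : (0:ℝ) < l ^ p := Real.rpow_pos_of_pos hl p
    have e2 : (0:ℝ) < (1 - Real.log l) ^ (p - 1) := Real.rpow_pos_of_pos hL _
    have e3 : (0:ℝ) < (2 * c) ^ p := Real.rpow_pos_of_pos h2c p
    field_simp
  calc Wfun w (uMeas d u {x | ENNReal.ofReal l < maximal d (E.indicator 1) x})
      ≤ Wfun w (uMeas d u {x | ENNReal.ofReal tv < maximal d g x}) := hW1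
    _ ≤ _ := key
    _ = _ := hid
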